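/- Let X be a 3-Hausdorff homogeneous space. Then |X| ≤ 2^{2^{c(X)·πχ(X)}}. -/

import Mathlib

open Cardinal Set

/-- The cellularity of `X`: the supremum of the cardinalities of pairwise
disjoint families of nonempty open sets, taken at least `ℵ₀`. -/
noncomputable def cellularity (X : Type u) [TopologicalSpace X] : Cardinal.{u} :=
  max ℵ₀ (⨆ 𝒰 : {𝒰 : Set (Set X) //
    (∀ U ∈ 𝒰, IsOpen U ∧ U.Nonempty) ∧ 𝒰.PairwiseDisjoint id}, #𝒰.1)

/-- `B` is a local π-base at `x`: a family of nonempty open sets such that every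
open neighbourhood of `x` contains a member of `B`. -/
def IsLocalPiBase {X : Type u} [TopologicalSpace X] (x : X) (B : Set (Set X)) : Prop :=
  (∀ U ∈ B, IsOpen U ∧ U.Nonempty) ∧ ∀ V : Set X, IsOpen V → x ∈ V → ∃ U ∈ B, U ⊆ V

/-- The π-character of `X`: the supremum over `x ∈ X` of the least cardinality
of a local π-base at `x`, taken at least `ℵ₀`. -/
noncomputable def piCharacter (X : Type u) [TopologicalSpace X] : Cardinal.{u} :=
  max ℵ₀ (⨆ x : X, sInf {κ | ∃ B : Set (Set X), IsLocalPiBase x B ∧ #B = κ})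

/-- A space is homogeneous if for all `x, y` some self-homeomorphism maps `x`
to `y`. -/
def Homogeneous (X : Type*) [TopologicalSpace X] : Prop :=
  ∀ x y : X, ∃ h : X ≃ₜ X, h x = y

/-- A space is 3-Hausdorff if any three distinct points admit open
neighbourhoods with empty intersection. -/
def ThreeHausdorff (X : Type*) [TopologicalSpace X] : Prop :=
  ∀ x y z : X, x ≠ y → x ≠ z → y ≠ z →
    ∃ U V W : Set X, IsOpen U ∧ IsOpen V ∧ IsOpen W ∧
      x ∈ U ∧ y ∈ V ∧ z ∈ W ∧ U ∩ V ∩ W = ∅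

namespace Stmt10Aux

open scoped Classical

set_option linter.unusedSectionVars false

universe u

section ER

variable {α C : Type u}

noncomputable def pickSet (s : Set α) (d : α) : α :=
  if h : s.Nonempty then h.some else d

lemma pickSet_mem {s : Set α} {d : α} (h : s.Nonempty) : pickSet s d ∈ s := by
  rw [pickSet, dif_pos h]; exact h.some_mem

lemma pickSet_eq_of_nonempty {s t : Set α} (h : s = t) (hs : s.Nonempty)
    (d d' : α) : pickSet s d = pickSet t d' := by
  subst h
  rw [pickSet, pickSet, dif_pos hs, dif_pos hs]

section chain

variable {σ : Type u} [LinearOrder σ] [WellFoundedLT σ]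

/-! ### Pair chains -/

def SP (f : α → α → C) (β : α) (g : σ → α) (i : σ) : Set α :=
  {a | (∀ j, j < i → a ≠ g j) ∧ ∀ j, j < i → f (g j) a = f (g j) β}

lemma SP_congr {f : α → α → C} {β : α} {g g' : σ → α} {i : σ}
    (h : ∀ j, j < i → g j = g' j) : SP f β g i = SP f β g' i := by
  ext a
  constructor <;> rintro ⟨h1, h2⟩ <;> refine ⟨fun j hj => ?_, fun j hj => ?_⟩
  · rw [← h j hj]; exact h1 j hj
  · rw [← h j hj]; exact h2 j hj
  · rw [h j hj]; exact h1 j hj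
  · rw [h j hj]; exact h2 j hj

noncomputable def chP (f : α → α → C) (β : α) : σ → α :=
  (wellFounded_lt (α := σ)).fix fun i rec =>
    pickSet (SP f β (fun j => if hj : j < i then rec j hj else β) i) β

lemma chP_eq (f : α → α → C) (β : α) (i : σ) :
    chP f β i = pickSet (SP f β (chP f β) i) β := by
  unfold chP
  rw [WellFounded.fix_eq]
  congr 1
  exact SP_congr fun j hj => dif_pos hj

lemma chP_mem {f : α → α → C} {β : α} {i : σ}
    (h : (SP f β (chP f β) i).Nonempty) : chP f β i ∈ SP f β (chP f β) i := by
  rw [chP_eq]; exact pickSet_mem h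

lemma beta_mem_SP {f : α → α → C} {β : α} {i : σ}
    (hg : ∀ j, j < i → chP f β j ≠ β) : β ∈ SP f β (chP f β) i :=
  ⟨fun j hj e => hg j hj e.symm, fun _ _ => rfl⟩

lemma chP_det {f : α → α → C} {β β' : α} {i₀ : σ}
    (hβ : ∀ j, j < i₀ → chP f β j ≠ β) (hβ' : ∀ j, j < i₀ → chP f β' j ≠ β')
    (hc : chP f β i₀ = β) (hc' : chP f β' i₀ = β')
    (ht : ∀ j, j < i₀ → f (chP f β j) β = f (chP f β' j) β') : β = β' := by
  have key : ∀ m : σ, m ≤ i₀ → chP f β m = chP f β' m := by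
    intro m
    induction m using WellFoundedLT.induction with
    | _ m IH =>
      intro hm
      have hset : SP f β (chP f β) m = SP f β' (chP f β') m := by
        ext a
        constructor <;> rintro ⟨h1, h2⟩ <;> refine ⟨fun j hj => ?_, fun j hj => ?_⟩
        · rw [← IH j hj (le_of_lt (lt_of_lt_of_le hj hm))]; exact h1 j hj
        · rw [← ht j (lt_of_lt_of_le hj hm), ← IH j hj (le_of_lt (lt_of_lt_of_le hj hm))]
          exact h2 j hj
        · rw [IH j hj (le_of_lt (lt_of_lt_of_le hj hm))]; exact h1 j hj
        · rw [ht j (lt_of_lt_of_le hj hm), IH j hj (le_of_lt (lt_of_lt_of_le hj hm))]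
          exact h2 j hj
      have hne1 : (SP f β (chP f β) m).Nonempty :=
        ⟨β, beta_mem_SP fun j hj => hβ j (lt_of_lt_of_le hj hm)⟩
      rw [chP_eq f β m, chP_eq f β' m]
      exact pickSet_eq_of_nonempty hset hne1 _ _
  have := key i₀ le_rfl
  rw [hc, hc'] at this
  exact this

/-! ### Triple chains -/

def ST (g : α → α → α → C) (β : α) (gc : σ → α) (i : σ) : Set α :=
  {a | (∀ j, j < i → a ≠ gc j) ∧
    ∀ j k, j < k → k < i → g (gc j) (gc k) a = g (gc j) (gc k) β}

lemma ST_congr {g : α → α → α → C} {β : α} {gc gc' : σ → α} {i : σ}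
    (h : ∀ j, j < i → gc j = gc' j) : ST g β gc i = ST g β gc' i := by
  ext a
  constructor <;> rintro ⟨h1, h2⟩ <;> refine ⟨fun j hj => ?_, fun j k hjk hk => ?_⟩
  · rw [← h j hj]; exact h1 j hj
  · rw [← h j (lt_trans hjk hk), ← h k hk]; exact h2 j k hjk hk
  · rw [h j hj]; exact h1 j hj
  · rw [h j (lt_trans hjk hk), h k hk]; exact h2 j k hjk hk

noncomputable def chT (g : α → α → α → C) (β : α) : σ → α :=
  (wellFounded_lt (α := σ)).fix fun i rec =>
    pickSet (ST g β (fun j => if hj : j < i then rec j hj else β) i) β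

lemma chT_eq (g : α → α → α → C) (β : α) (i : σ) :
    chT g β i = pickSet (ST g β (chT g β) i) β := by
  unfold chT
  rw [WellFounded.fix_eq]
  congr 1
  exact ST_congr fun j hj => dif_pos hj

lemma chT_mem {g : α → α → α → C} {β : α} {i : σ}
    (h : (ST g β (chT g β) i).Nonempty) : chT g β i ∈ ST g β (chT g β) i := by
  rw [chT_eq]; exact pickSet_mem h

lemma beta_mem_ST {g : α → α → α → C} {β : α} {i : σ}
    (hg : ∀ j, j < i → chT g β j ≠ β) : β ∈ ST g β (chT g β) i :=
  ⟨fun j hj e => hg j hj e.symm, fun _ _ _ _ => rfl⟩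

lemma chT_det {g : α → α → α → C} {β β' : α} {i₀ : σ}
    (hβ : ∀ j, j < i₀ → chT g β j ≠ β)
    (hc : chT g β i₀ = β) (hc' : chT g β' i₀ = β')
    (ht : ∀ j k, j < k → k < i₀ →
      g (chT g β j) (chT g β k) β = g (chT g β' j) (chT g β' k) β') : β = β' := by
  have key : ∀ m : σ, m ≤ i₀ → chT g β m = chT g β' m := by
    intro m
    induction m using WellFoundedLT.induction with
    | _ m IH =>
      intro hm
      have hset : ST g β (chT g β) m = ST g β' (chT g β') m := by
        ext a
        constructor <;> rintro ⟨h1, h2⟩ <;>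
          refine ⟨fun j hj => ?_, fun j k hjk hk => ?_⟩
        · rw [← IH j hj (le_of_lt (lt_of_lt_of_le hj hm))]; exact h1 j hj
        · rw [← ht j k hjk (lt_of_lt_of_le hk hm),
            ← IH j (lt_trans hjk hk) (le_of_lt (lt_of_lt_of_le (lt_trans hjk hk) hm)),
            ← IH k hk (le_of_lt (lt_of_lt_of_le hk hm))]
          exact h2 j k hjk hk
        · rw [IH j hj (le_of_lt (lt_of_lt_of_le hj hm))]; exact h1 j hj
        · rw [ht j k hjk (lt_of_lt_of_le hk hm),
            IH j (lt_trans hjk hk) (le_of_lt (lt_of_lt_of_le (lt_trans hjk hk) hm)),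
            IH k hk (le_of_lt (lt_of_lt_of_le hk hm))]
          exact h2 j k hjk hk
      have hne1 : (ST g β (chT g β) m).Nonempty :=
        ⟨β, beta_mem_ST fun j hj => hβ j (lt_of_lt_of_le hj hm)⟩
      rw [chT_eq g β m, chT_eq g β' m]
      exact pickSet_eq_of_nonempty hset hne1 _ _
  have := key i₀ le_rfl
  rw [hc, hc'] at this
  exact this

end chain

/-! ### The pair Erdős–Rado theorem (core form) -/

theorem pairs_core {κ : Cardinal.{u}} (hκ : ℵ₀ ≤ κ)
    (hα : (2 : Cardinal.{u}) ^ κ < #α) (hC : #C ≤ κ) (f : α → α → C) :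
    ∃ (ι : Type u) (_ : LinearOrder ι) (e : ι → α) (c : C),
      Function.Injective e ∧ κ < #ι ∧ ∀ i j : ι, i < j → f (e i) (e j) = c := by
  classical
  have hαne : Nonempty α := Cardinal.mk_ne_zero_iff.mp
    (ne_of_gt (lt_of_le_of_lt (Cardinal.zero_le _) hα))
  obtain ⟨a₀⟩ := hαne
  have hCne : #C ≠ 0 := Cardinal.mk_ne_zero_iff.mpr ⟨f a₀ a₀⟩
  set σ : Type u := (Order.succ κ).ord.ToType with hσ
  have hσcard : #σ = Order.succ κ := by
    rw [hσ, Cardinal.mk_toType, Cardinal.card_ord]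
  haveI hwfσ : WellFoundedLT σ := wellFoundedLT_toType _
  haveI : IsWellOrder σ (· < ·) := isWellOrder_lt
  have hIio : ∀ i : σ, #{j : σ // j < i} ≤ κ := by
    intro i
    have h1 : Ordinal.typein (· < ·) i < Ordinal.type ((· < ·) : σ → σ → Prop) :=
      Ordinal.typein_lt_type _ i
    rw [Ordinal.type_toType] at h1
    have h2 := Cardinal.lt_ord.mp h1
    rw [Order.lt_succ_iff] at h2
    exact le_trans (le_of_eq (Ordinal.card_typein i)) h2
  by_cases hunc : ∃ β : α, ∀ i : σ, chP f β i ≠ β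
  · obtain ⟨β, hβ⟩ := hunc
    have hmem : ∀ i : σ, chP f β i ∈ SP f β (chP f β) i := fun i =>
      chP_mem ⟨β, beta_mem_SP fun j _ => hβ j⟩
    have hinj : Function.Injective (chP f β : σ → α) := by
      intro i j hij
      by_contra hne'
      rcases lt_or_gt_of_ne hne' with h | h
      · exact (hmem j).1 i h hij.symm
      · exact (hmem i).1 j h hij
    set t : σ → C := fun j => f (chP f β j) β with htdef
    have hfib : ∃ c : C, κ < #{j : σ // t j = c} := by
      by_contra hall
      push_neg at hall
      have hEq : #σ = #(Σ c : C, {j : σ // t j = c}) :=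
        (Cardinal.mk_congr (Equiv.sigmaFiberEquiv t)).symm
      have hle : #σ ≤ κ := by
        rw [hEq, Cardinal.mk_sigma]
        calc Cardinal.sum (fun c : C => #{j : σ // t j = c})
            ≤ Cardinal.sum (fun _ : C => κ) := Cardinal.sum_le_sum _ _ fun c => hall c
          _ = #C * κ := Cardinal.sum_const' _ _
          _ ≤ κ * κ := mul_le_mul' hC le_rfl
          _ = κ := Cardinal.mul_eq_self hκ
      rw [hσcard] at hle
      exact absurd (lt_of_lt_of_le (Order.lt_succ κ) hle) (lt_irrefl κ)
    obtain ⟨c, hc⟩ := hfib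
    refine ⟨{j : σ // t j = c}, inferInstance, fun j => chP f β j.1, c, ?_, hc, ?_⟩
    · intro a b hab
      exact Subtype.ext (hinj hab)
    · intro i j hij
      have h2 := (hmem j.1).2 i.1 hij
      rw [h2]
      exact i.2
  · push_neg at hunc
    exfalso
    have hmin : ∀ β : α, ∃ i : σ, chP f β i = β := hunc
    set i₀ : α → σ := fun β =>
      (wellFounded_lt (α := σ)).min {i | chP f β i = β} (hmin β) with hi₀def
    have hi₀mem : ∀ β, chP f β (i₀ β) = β := fun β =>
      (wellFounded_lt (α := σ)).min_mem _ (hmin β)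
    have hi₀min : ∀ β (j : σ), j < i₀ β → chP f β j ≠ β := fun β j hj e =>
      (wellFounded_lt (α := σ)).not_lt_min _ e hj
    set Φ : α → Σ i : σ, ({j : σ // j < i} → C) := fun β =>
      ⟨i₀ β, fun j => f (chP f β j.1) β⟩ with hΦdef
    have keyinj : ∀ (i i' : σ), i = i' →
        ∀ (F : {j : σ // j < i} → C) (G : {j : σ // j < i'} → C),
        (⟨i, F⟩ : Σ i : σ, ({j : σ // j < i} → C)) = ⟨i', G⟩ →
        ∀ (j : σ) (hj : j < i) (hj' : j < i'), F ⟨j, hj⟩ = G ⟨j, hj'⟩ := by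
      rintro i i' rfl F G h j hj hj'
      have := eq_of_heq (Sigma.mk.inj_iff.mp h).2
      rw [this]
    have hΦ : Function.Injective Φ := by
      intro β β' h
      have h1 : i₀ β = i₀ β' := congrArg Sigma.fst h
      refine chP_det (hi₀min β) (fun j hj => hi₀min β' j (h1 ▸ hj))
        (hi₀mem β) (by rw [h1]; exact hi₀mem β') ?_
      intro j hj
      exact keyinj _ _ h1 _ _ h j hj (h1 ▸ hj)
    have hcount : #α ≤ (2 : Cardinal.{u}) ^ κ := by
      calc #α ≤ #(Σ i : σ, ({j : σ // j < i} → C)) := Cardinal.mk_le_of_injective hΦ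
        _ = Cardinal.sum (fun i : σ => #({j : σ // j < i} → C)) := Cardinal.mk_sigma _
        _ ≤ Cardinal.sum (fun _ : σ => (2 : Cardinal.{u}) ^ κ) := by
            refine Cardinal.sum_le_sum _ _ fun i => ?_
            rw [← Cardinal.power_def]
            calc #C ^ #{j : σ // j < i} ≤ #C ^ κ :=
                Cardinal.power_le_power_left hCne (hIio i)
              _ ≤ ((2 : Cardinal.{u}) ^ κ) ^ κ :=
                Cardinal.power_le_power_right
                  (le_trans hC (Cardinal.cantor κ).le)
              _ = (2 : Cardinal.{u}) ^ (κ * κ) := (Cardinal.power_mul).symm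
              _ = (2 : Cardinal.{u}) ^ κ := by rw [Cardinal.mul_eq_self hκ]
        _ = #σ * ((2 : Cardinal.{u}) ^ κ) := Cardinal.sum_const' _ _
        _ ≤ ((2 : Cardinal.{u}) ^ κ) * ((2 : Cardinal.{u}) ^ κ) := by
            refine mul_le_mul' ?_ le_rfl
            rw [hσcard, Order.succ_le_iff]
            exact Cardinal.cantor κ
        _ = (2 : Cardinal.{u}) ^ κ :=
            Cardinal.mul_eq_self (le_trans hκ (Cardinal.cantor κ).le)
    exact absurd hα (not_lt.mpr hcount)

/-! ### Monotone pair Erdős–Rado -/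

theorem pairs_mono {κ : Cardinal.{u}} (hκ : ℵ₀ ≤ κ) [LinearOrder α]
    (hα : (2 : Cardinal.{u}) ^ κ < #α) (hC : #C ≤ κ) (f : α → α → C) :
    ∃ (ι : Type u) (_ : LinearOrder ι) (e : ι → α) (c : C),
      StrictMono e ∧ κ < #ι ∧ ∀ i j : ι, i < j → f (e i) (e j) = c := by
  classical
  set C' : Type u := C × C × ULift.{u} Bool with hC'
  have hC'card : #C' ≤ κ := by
    rw [hC']
    have h2κ : (2 : Cardinal.{u}) ≤ κ :=
      le_trans (by exact_mod_cast (Cardinal.nat_lt_aleph0 2).le) hκ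
    calc #(C × C × ULift.{u} Bool) = #C * (#C * 2) := by simp
      _ ≤ κ * (κ * κ) := mul_le_mul' hC (mul_le_mul' hC h2κ)
      _ = κ := by rw [Cardinal.mul_eq_self hκ, Cardinal.mul_eq_self hκ]
  set f' : α → α → C' := fun x y => (f x y, f y x, ULift.up (decide (x < y))) with hf'
  obtain ⟨ι, lo, e, c, hinj, hcard, hhom⟩ := pairs_core hκ hα hC'card f'
  obtain ⟨c₁, c₂, bit⟩ := c
  have h1 : ∀ i j : ι, i < j → f (e i) (e j) = c₁ := by
    intro i j hij
    exact congrArg (fun r => r.1) (hhom i j hij)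
  have h2 : ∀ i j : ι, i < j → f (e j) (e i) = c₂ := by
    intro i j hij
    exact congrArg (fun r => r.2.1) (hhom i j hij)
  have h3 : ∀ i j : ι, i < j → decide (e i < e j) = bit.down := by
    intro i j hij
    exact congrArg (fun r => (r.2.2).down) (hhom i j hij)
  rcases Bool.eq_false_or_eq_true bit.down with hbit | hbit
  · -- e is monotone on the index order
    refine ⟨ι, lo, e, c₁, ?_, hcard, h1⟩
    intro i j hij
    have := h3 i j hij
    rw [hbit] at this
    exact of_decide_eq_true this
  · -- e is antitone on the index order; use the dual order
    refine ⟨ιᵒᵈ, inferInstance, fun i => e (OrderDual.ofDual i), c₂, ?_, hcard, ?_⟩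
    · intro i j hij
      have hij' : OrderDual.ofDual j < OrderDual.ofDual i := hij
      have hne' : e (OrderDual.ofDual j) ≠ e (OrderDual.ofDual i) :=
        fun hh => (ne_of_lt hij') (hinj hh)
      have hnlt : ¬ (e (OrderDual.ofDual j) < e (OrderDual.ofDual i)) := by
        have := h3 _ _ hij'
        rw [hbit] at this
        simpa using this
      rcases lt_or_gt_of_ne hne' with hlt | hlt
      · exact absurd hlt hnlt
      · exact hlt
    · intro i j hij
      exact h2 _ _ (show OrderDual.ofDual j < OrderDual.ofDual i from hij)

/-! ### The triple Erdős–Rado theorem -/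

theorem erdosRado3 {κ : Cardinal.{u}} (hκ : ℵ₀ ≤ κ) {α C : Type u}
    (hα : (2 : Cardinal.{u}) ^ ((2 : Cardinal.{u}) ^ κ) < #α) (hC : #C ≤ κ)
    (g : α → α → α → C) :
    ∃ (ι : Type u) (_ : LinearOrder ι) (e : ι → α) (c : C),
      Function.Injective e ∧ κ < #ι ∧
      ∀ i j k : ι, i < j → j < k → g (e i) (e j) (e k) = c := by
  classical
  have hαne : Nonempty α := Cardinal.mk_ne_zero_iff.mp
    (ne_of_gt (lt_of_le_of_lt (Cardinal.zero_le _) hα))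
  obtain ⟨a₀⟩ := hαne
  have hCne : #C ≠ 0 := Cardinal.mk_ne_zero_iff.mpr ⟨g a₀ a₀ a₀⟩
  have hκ2 : ℵ₀ ≤ (2 : Cardinal.{u}) ^ κ := le_trans hκ (Cardinal.cantor κ).le
  set σ : Type u := (Order.succ ((2 : Cardinal.{u}) ^ κ)).ord.ToType with hσ
  haveI hwfσ : WellFoundedLT σ := wellFoundedLT_toType _
  haveI : IsWellOrder σ (· < ·) := isWellOrder_lt
  have hσcard : #σ = Order.succ ((2 : Cardinal.{u}) ^ κ) := by
    rw [hσ, Cardinal.mk_toType, Cardinal.card_ord]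
  have hIio : ∀ i : σ, #{j : σ // j < i} ≤ (2 : Cardinal.{u}) ^ κ := by
    intro i
    have h1 : Ordinal.typein (· < ·) i < Ordinal.type ((· < ·) : σ → σ → Prop) :=
      Ordinal.typein_lt_type _ i
    rw [Ordinal.type_toType] at h1
    have h2 := Cardinal.lt_ord.mp h1
    rw [Order.lt_succ_iff] at h2
    exact le_trans (le_of_eq (Ordinal.card_typein i)) h2
  have hPairs : ∀ i : σ, #{p : σ × σ // p.1 < p.2 ∧ p.2 < i} ≤ (2 : Cardinal.{u}) ^ κ := by
    intro i
    have hembed : Function.Injective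
        (fun p : {p : σ × σ // p.1 < p.2 ∧ p.2 < i} =>
          ((⟨p.1.1, lt_trans p.2.1 p.2.2⟩, ⟨p.1.2, p.2.2⟩) :
            {j : σ // j < i} × {j : σ // j < i})) := by
      intro p q hpq
      have e1 : p.1.1 = q.1.1 := congrArg (fun r => r.1.1) hpq
      have e2 : p.1.2 = q.1.2 := congrArg (fun r => r.2.1) hpq
      exact Subtype.ext (Prod.ext e1 e2)
    calc #{p : σ × σ // p.1 < p.2 ∧ p.2 < i}
        ≤ #({j : σ // j < i} × {j : σ // j < i}) := Cardinal.mk_le_of_injective hembed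
      _ = #{j : σ // j < i} * #{j : σ // j < i} := by simp
      _ ≤ ((2 : Cardinal.{u}) ^ κ) * ((2 : Cardinal.{u}) ^ κ) :=
          mul_le_mul' (hIio i) (hIio i)
      _ = (2 : Cardinal.{u}) ^ κ := Cardinal.mul_eq_self hκ2
  by_cases hunc : ∃ β : α, ∀ i : σ, chT g β i ≠ β
  · obtain ⟨β, hβ⟩ := hunc
    have hmem : ∀ i : σ, chT g β i ∈ ST g β (chT g β) i := fun i =>
      chT_mem ⟨β, beta_mem_ST fun j _ => hβ j⟩
    have hinj : Function.Injective (chT g β : σ → α) := by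
      intro i j hij
      by_contra hne'
      rcases lt_or_gt_of_ne hne' with h | h
      · exact (hmem j).1 i h hij.symm
      · exact (hmem i).1 j h hij
    set F : σ → σ → C := fun j k => g (chT g β j) (chT g β k) β with hF
    have hσbig : (2 : Cardinal.{u}) ^ κ < #σ := by
      rw [hσcard]
      exact Order.lt_succ _
    obtain ⟨ι, lo, e', c, hmono, hcard, hhom⟩ := pairs_mono hκ hσbig hC F
    refine ⟨ι, lo, fun i => chT g β (e' i), c, ?_, hcard, ?_⟩
    · exact hinj.comp hmono.injective
    · intro i j k hij hjk
      have h1 : e' i < e' j := hmono hij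
      have h2 : e' j < e' k := hmono hjk
      have h3 := (hmem (e' k)).2 (e' i) (e' j) h1 h2
      rw [h3]
      exact hhom i j hij
  · push_neg at hunc
    exfalso
    have hmin : ∀ β : α, ∃ i : σ, chT g β i = β := hunc
    set i₀ : α → σ := fun β =>
      (wellFounded_lt (α := σ)).min {i | chT g β i = β} (hmin β) with hi₀def
    have hi₀mem : ∀ β, chT g β (i₀ β) = β := fun β =>
      (wellFounded_lt (α := σ)).min_mem _ (hmin β)
    have hi₀min : ∀ β (j : σ), j < i₀ β → chT g β j ≠ β := fun β j hj e =>
      (wellFounded_lt (α := σ)).not_lt_min _ e hj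
    set Φ : α → Σ i : σ, ({p : σ × σ // p.1 < p.2 ∧ p.2 < i} → C) := fun β =>
      ⟨i₀ β, fun p => g (chT g β p.1.1) (chT g β p.1.2) β⟩ with hΦdef
    have keyinj : ∀ (i i' : σ), i = i' →
        ∀ (F : {p : σ × σ // p.1 < p.2 ∧ p.2 < i} → C)
          (G : {p : σ × σ // p.1 < p.2 ∧ p.2 < i'} → C),
        (⟨i, F⟩ : Σ i : σ, ({p : σ × σ // p.1 < p.2 ∧ p.2 < i} → C)) = ⟨i', G⟩ →
        ∀ (p : σ × σ) (hp : p.1 < p.2 ∧ p.2 < i) (hp' : p.1 < p.2 ∧ p.2 < i'),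
          F ⟨p, hp⟩ = G ⟨p, hp'⟩ := by
      rintro i i' rfl F G h p hp hp'
      have := eq_of_heq (Sigma.mk.inj_iff.mp h).2
      rw [this]
    have hΦ : Function.Injective Φ := by
      intro β β' h
      have h1 : i₀ β = i₀ β' := congrArg Sigma.fst h
      refine chT_det (hi₀min β) (hi₀mem β) (by rw [h1]; exact hi₀mem β') ?_
      intro j k hjk hk
      exact keyinj _ _ h1 _ _ h (j, k) ⟨hjk, hk⟩ ⟨hjk, h1 ▸ hk⟩
    have hcount : #α ≤ (2 : Cardinal.{u}) ^ ((2 : Cardinal.{u}) ^ κ) := by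
      have hpow : ∀ i : σ, #({p : σ × σ // p.1 < p.2 ∧ p.2 < i} → C)
          ≤ (2 : Cardinal.{u}) ^ ((2 : Cardinal.{u}) ^ κ) := by
        intro i
        rw [← Cardinal.power_def]
        calc #C ^ #{p : σ × σ // p.1 < p.2 ∧ p.2 < i}
            ≤ #C ^ ((2 : Cardinal.{u}) ^ κ) :=
              Cardinal.power_le_power_left hCne (hPairs i)
          _ ≤ ((2 : Cardinal.{u}) ^ κ) ^ ((2 : Cardinal.{u}) ^ κ) :=
              Cardinal.power_le_power_right (le_trans hC (Cardinal.cantor κ).le)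
          _ = (2 : Cardinal.{u}) ^ (κ * ((2 : Cardinal.{u}) ^ κ)) :=
              (Cardinal.power_mul).symm
          _ = (2 : Cardinal.{u}) ^ ((2 : Cardinal.{u}) ^ κ) := by
              rw [Cardinal.mul_eq_max hκ hκ2, max_eq_right (Cardinal.cantor κ).le]
      calc #α ≤ #(Σ i : σ, ({p : σ × σ // p.1 < p.2 ∧ p.2 < i} → C)) :=
          Cardinal.mk_le_of_injective hΦ
        _ = Cardinal.sum (fun i : σ => #({p : σ × σ // p.1 < p.2 ∧ p.2 < i} → C)) :=
          Cardinal.mk_sigma _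
        _ ≤ Cardinal.sum (fun _ : σ => (2 : Cardinal.{u}) ^ ((2 : Cardinal.{u}) ^ κ)) :=
          Cardinal.sum_le_sum _ _ hpow
        _ = #σ * ((2 : Cardinal.{u}) ^ ((2 : Cardinal.{u}) ^ κ)) := Cardinal.sum_const' _ _
        _ ≤ ((2 : Cardinal.{u}) ^ ((2 : Cardinal.{u}) ^ κ))
            * ((2 : Cardinal.{u}) ^ ((2 : Cardinal.{u}) ^ κ)) := by
            refine mul_le_mul' ?_ le_rfl
            rw [hσcard, Order.succ_le_iff]
            exact Cardinal.cantor _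
        _ = (2 : Cardinal.{u}) ^ ((2 : Cardinal.{u}) ^ κ) :=
            Cardinal.mul_eq_self (le_trans hκ2 (Cardinal.cantor _).le)
    exact absurd hα (not_lt.mpr hcount)

end ER



variable {X : Type u} [TopologicalSpace X]

lemma cell_le {𝒰 : Set (Set X)} (h1 : ∀ U ∈ 𝒰, IsOpen U ∧ U.Nonempty)
    (h2 : 𝒰.PairwiseDisjoint id) : #𝒰 ≤ cellularity X :=
  le_trans (le_ciSup (Cardinal.bddAbove_range _) (⟨𝒰, h1, h2⟩ :
    {𝒰 : Set (Set X) // (∀ U ∈ 𝒰, IsOpen U ∧ U.Nonempty) ∧ 𝒰.PairwiseDisjoint id}))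
    (le_max_right _ _)

lemma point2 {ι : Type u} [LinearOrder ι] (G : ι → Set X)
    (hop : ∀ i, IsOpen (G i)) (hne : ∀ i, (G i).Nonempty)
    (h2 : ∀ i j k : ι, i < j → j < k → G i ∩ G j ∩ G k = ∅) :
    #ι ≤ cellularity X := by
  classical
  have hcell : ℵ₀ ≤ cellularity X := le_max_left _ _
  have base : ∀ (q : X) (i j k : ι), i < j → j < k →
      q ∈ G i → q ∈ G j → q ∈ G k → False := by
    intro q i j k hij hjk hi hj hk
    have := h2 i j k hij hjk
    rw [Set.eq_empty_iff_forall_notMem] at this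
    exact this q ⟨⟨hi, hj⟩, hk⟩
  have pt2 : ∀ (q : X) (i j k : ι), i ≠ j → i ≠ k → j ≠ k →
      q ∈ G i → q ∈ G j → q ∈ G k → False := by
    intro q i j k hij hik hjk hi hj hk
    rcases lt_or_gt_of_ne hij with h1 | h1 <;>
      rcases lt_or_gt_of_ne hik with h2' | h2' <;>
        rcases lt_or_gt_of_ne hjk with h3 | h3
    · exact base q i j k h1 h3 hi hj hk
    · exact base q i k j h2' h3 hi hk hj
    · exact lt_asymm (h1.trans h3) h2'
    · exact base q k i j h2' h1 hk hi hj
    · exact base q j i k h1 h2' hj hi hk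
    · exact lt_asymm (h2'.trans h3) h1
    · exact base q j k i h3 h2' hj hk hi
    · exact base q k j i h3 h1 hk hj hi
  set D : Set (Set X) := {S | ∃ i j : ι, i ≠ j ∧ S = G i ∩ G j ∧ S.Nonempty} with hD
  have hDprop : ∀ S ∈ D, IsOpen S ∧ S.Nonempty := by
    rintro S ⟨i, j, hij, rfl, hne'⟩
    exact ⟨(hop i).inter (hop j), hne'⟩
  have hDdisj : D.PairwiseDisjoint id := by
    rintro S hS T hT hST
    obtain ⟨i, j, hij, rfl, -⟩ := hS
    obtain ⟨k, l, hkl, rfl, -⟩ := hT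
    rw [Function.onFun, Set.disjoint_left]
    intro q hq hq'
    simp only [id_eq] at hq hq'
    have hk : k = i ∨ k = j := by
      by_contra h
      push_neg at h
      exact pt2 q i j k hij (fun e => h.1 e.symm) (fun e => h.2 e.symm)
        hq.1 hq.2 hq'.1
    have hl : l = i ∨ l = j := by
      by_contra h
      push_neg at h
      exact pt2 q i j l hij (fun e => h.1 e.symm) (fun e => h.2 e.symm)
        hq.1 hq.2 hq'.2
    rcases hk with rfl | rfl <;> rcases hl with rfl | rfl
    · exact hkl rfl
    · exact hST rfl
    · exact hST (Set.inter_comm _ _)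
    · exact hkl rfl
  have hDcard : #D ≤ cellularity X := cell_le hDprop hDdisj
  set I2 : Set ι := {i | ∃ j, j ≠ i ∧ (G i ∩ G j).Nonempty} with hI2
  have hI2card : #I2 ≤ cellularity X := by
    have hw : ∀ i : I2, ∃ j, j ≠ i.1 ∧ (G i.1 ∩ G j).Nonempty := fun i => i.2
    choose w hw1 hw2 using hw
    let ψ : I2 → ↥D × ULift.{u} Bool := fun i =>
      (⟨G i.1 ∩ G (w i), ⟨i.1, w i, fun e => hw1 i e.symm, rfl, hw2 i⟩⟩,
        ULift.up (decide (i.1 < w i)))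
    have hψ : Function.Injective ψ := by
      intro a b hab
      have h1 : G a.1 ∩ G (w a) = G b.1 ∩ G (w b) := congrArg (fun r => (Prod.fst r).1) hab
      have h2' : decide (a.1 < w a) = decide (b.1 < w b) :=
        congrArg (fun r => (Prod.snd r).down) hab
      obtain ⟨q, hq⟩ := hw2 a
      have hq' : q ∈ G b.1 ∩ G (w b) := h1 ▸ hq
      apply Subtype.ext
      by_contra hne'
      have hba : b.1 = w a := by
        by_contra h
        exact pt2 q a.1 (w a) b.1 (fun e => hw1 a e.symm) hne' (fun e => h e.symm)
          hq.1 hq.2 hq'.1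
      have hab' : a.1 = w b := by
        by_contra h
        exact pt2 q b.1 (w b) a.1 (fun e => hw1 b e.symm) (fun e => hne' e.symm)
          (fun e => h e.symm) hq'.1 hq'.2 hq.1
      rw [← hba, ← hab'] at h2'
      rcases lt_or_gt_of_ne hne' with h | h
      · simp [h, lt_asymm h] at h2'
      · simp [h, lt_asymm h] at h2'
    calc #I2 ≤ #(↥D × ULift.{u} Bool) := Cardinal.mk_le_of_injective hψ
      _ = #D * 2 := by simp
      _ ≤ cellularity X * cellularity X :=
          mul_le_mul' hDcard (le_trans (by exact_mod_cast (Cardinal.nat_lt_aleph0 2).le) hcell)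
      _ = cellularity X := Cardinal.mul_eq_self hcell
  have hI1card : #(I2ᶜ : Set ι) ≤ cellularity X := by
    have hdisj' : ∀ i ∈ I2ᶜ, ∀ j, j ≠ i → G i ∩ G j = ∅ := by
      intro i hi j hj
      rw [← Set.not_nonempty_iff_eq_empty]
      exact fun hn => hi ⟨j, hj, hn⟩
    have hinj : Set.InjOn G I2ᶜ := by
      intro i hi j hj hGij
      by_contra hne'
      have : G i ∩ G j = ∅ := hdisj' i hi j (fun e => hne' e.symm)
      rw [hGij, Set.inter_self] at this
      exact (hne j).ne_empty this
    have himg : ∀ S ∈ G '' I2ᶜ, IsOpen S ∧ S.Nonempty := by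
      rintro S ⟨i, -, rfl⟩; exact ⟨hop i, hne i⟩
    have hdisj2 : (G '' I2ᶜ).PairwiseDisjoint id := by
      rintro S ⟨i, hi, rfl⟩ T ⟨j, hj, rfl⟩ hST
      have hij : i ≠ j := fun e => hST (by rw [e])
      rw [Function.onFun, Set.disjoint_left]
      intro q hq hq'
      simp only [id_eq] at hq hq'
      have := hdisj' i hi j (fun e => hij e.symm)
      rw [Set.eq_empty_iff_forall_notMem] at this
      exact this q ⟨hq, hq'⟩
    calc #(I2ᶜ : Set ι) = #(G '' I2ᶜ) := (Cardinal.mk_image_eq_of_injOn G _ hinj).symm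
      _ ≤ cellularity X := cell_le himg hdisj2
  calc #ι = #(univ : Set ι) := Cardinal.mk_univ.symm
    _ = #(I2ᶜ ∪ I2 : Set ι) := by rw [Set.compl_union_self]
    _ ≤ #(I2ᶜ : Set ι) + #I2 := Cardinal.mk_union_le _ _
    _ ≤ cellularity X + cellularity X := add_le_add hI1card hI2card
    _ = cellularity X := Cardinal.add_eq_self hcell

end Stmt10Aux

open Stmt10Aux in
theorem stmt10 (X : Type u) [TopologicalSpace X]
    (h3 : ThreeHausdorff X) (hhom : Homogeneous X) :
    #X ≤ 2 ^ ((2 : Cardinal) ^ (cellularity X * piCharacter X)) := by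
  classical
  by_contra hcon
  push_neg at hcon
  set κ : Cardinal.{u} := cellularity X * piCharacter X with hκdef
  have hcell : ℵ₀ ≤ cellularity X := le_max_left _ _
  have hpich : ℵ₀ ≤ piCharacter X := le_max_left _ _
  have hone : (1 : Cardinal) ≤ piCharacter X := le_trans (by simp) hpich
  have hcellκ : cellularity X ≤ κ := by
    calc cellularity X = cellularity X * 1 := (mul_one _).symm
      _ ≤ cellularity X * piCharacter X := mul_le_mul' le_rfl hone
  have hpichκ : piCharacter X ≤ κ := by
    calc piCharacter X = 1 * piCharacter X := (one_mul _).symm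
      _ ≤ cellularity X * piCharacter X :=
        mul_le_mul' (le_trans (by simp) hcell) le_rfl
  have hκinf : ℵ₀ ≤ κ := le_trans hcell hcellκ
  -- X is nonempty
  have hXne : Nonempty X := by
    rw [← Cardinal.mk_ne_zero_iff]
    intro h0
    rw [h0] at hcon
    exact absurd (Cardinal.zero_le _) (not_le.mpr hcon)
  obtain ⟨p⟩ := hXne
  -- a small local π-base at p
  have hSne : {c | ∃ B : Set (Set X), IsLocalPiBase p B ∧ #B = c}.Nonempty := by
    refine ⟨#{U : Set X | IsOpen U ∧ U.Nonempty}, {U | IsOpen U ∧ U.Nonempty}, ⟨?_, ?_⟩, rfl⟩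
    · exact fun U hU => hU
    · exact fun V hV hpV => ⟨V, ⟨hV, ⟨p, hpV⟩⟩, subset_rfl⟩
  obtain ⟨B, hB, hBcard⟩ := csInf_mem hSne
  have hBκ : #B ≤ κ := by
    refine le_trans ?_ hpichκ
    rw [hBcard]
    refine le_trans ?_ (le_max_right _ _)
    exact le_ciSup (Cardinal.bddAbove_range _) p
  -- homeomorphisms moving p around
  have hφ : ∀ x : X, ∃ h : X ≃ₜ X, h p = x := fun x => hhom p x
  choose φ hφp using hφ
  set T : X → Set X → Set X := fun x b => φ x '' b with hT
  have hTopen : ∀ x, ∀ b ∈ B, IsOpen (T x b) := fun x b hb =>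
    (Homeomorph.isOpen_image _).mpr (hB.1 b hb).1
  have hTne : ∀ x, ∀ b ∈ B, (T x b).Nonempty := fun x b hb =>
    ((hB.1 b hb).2).image _
  have hBne : Nonempty ↥B := by
    obtain ⟨U, hU, -⟩ := hB.2 univ isOpen_univ (mem_univ p)
    exact ⟨⟨U, hU⟩⟩
  -- key: a common π-base element separating any three distinct points
  have key : ∀ x y z : X, x ≠ y → x ≠ z → y ≠ z →
      ∃ b ∈ B, T x b ∩ T y b ∩ T z b = ∅ := by
    intro x y z hxy hxz hyz
    obtain ⟨U, V, W, hU, hV, hW, hxU, hyV, hzW, hUVW⟩ := h3 x y z hxy hxz hyz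
    have hNopen : IsOpen (φ x ⁻¹' U ∩ φ y ⁻¹' V ∩ φ z ⁻¹' W) :=
      (((φ x).isOpen_preimage.mpr hU).inter ((φ y).isOpen_preimage.mpr hV)).inter
        ((φ z).isOpen_preimage.mpr hW)
    have hpN : p ∈ φ x ⁻¹' U ∩ φ y ⁻¹' V ∩ φ z ⁻¹' W := by
      refine ⟨⟨?_, ?_⟩, ?_⟩ <;> simp only [mem_preimage] <;>
        rw [hφp] <;> assumption
    obtain ⟨b, hbB, hbN⟩ := hB.2 _ hNopen hpN
    refine ⟨b, hbB, ?_⟩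
    have hsub : T x b ∩ T y b ∩ T z b ⊆ U ∩ V ∩ W := by
      refine Set.inter_subset_inter (Set.inter_subset_inter ?_ ?_) ?_ <;>
        refine Set.Subset.trans (Set.image_mono ?_) (Set.image_preimage_subset _ _)
      · exact hbN.trans (Set.inter_subset_left.trans Set.inter_subset_left)
      · exact hbN.trans (Set.inter_subset_left.trans Set.inter_subset_right)
      · exact hbN.trans Set.inter_subset_right
    rw [← Set.subset_empty_iff]
    exact hUVW ▸ hsub
  -- colouring
  set g : X → X → X → ↥B := fun x y z =>
    if h : x ≠ y ∧ x ≠ z ∧ y ≠ z then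
      ⟨Classical.choose (key x y z h.1 h.2.1 h.2.2),
        (Classical.choose_spec (key x y z h.1 h.2.1 h.2.2)).1⟩
    else Classical.arbitrary _ with hg
  have hgspec : ∀ x y z : X, (h : x ≠ y ∧ x ≠ z ∧ y ≠ z) →
      T x (g x y z).1 ∩ T y (g x y z).1 ∩ T z (g x y z).1 = ∅ := by
    intro x y z h
    rw [hg]
    simp only [dif_pos h]
    exact (Classical.choose_spec (key x y z h.1 h.2.1 h.2.2)).2
  -- apply Erdős–Rado
  obtain ⟨ι, lo, e, c, hinj, hκι, hhomog⟩ :=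
    erdosRado3 hκinf hcon (le_trans le_rfl hBκ) g
  -- the point-2 family
  have hGempty : ∀ i j k : ι, i < j → j < k →
      T (e i) c.1 ∩ T (e j) c.1 ∩ T (e k) c.1 = ∅ := by
    intro i j k hij hjk
    have hd : e i ≠ e j ∧ e i ≠ e k ∧ e j ≠ e k :=
      ⟨fun h => (ne_of_lt hij) (hinj h), fun h => (ne_of_lt (hij.trans hjk)) (hinj h),
        fun h => (ne_of_lt hjk) (hinj h)⟩
    have := hgspec (e i) (e j) (e k) hd
    rwa [hhomog i j k hij hjk] at this
  have hfin : #ι ≤ cellularity X :=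
    point2 (fun i => T (e i) c.1) (fun i => hTopen _ _ c.2) (fun i => hTne _ _ c.2) hGempty
  exact absurd (lt_of_lt_of_le hκι (le_trans hfin hcellκ)) (lt_irrefl κ)
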